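/- Fix d ∈ ℕ, ‖θ₀‖ > 0, σ² ≥ 0, and η > 0. Define E(α, β, γ) := ((β + (d+2)γ)α − 1)²‖θ₀‖²₂ + 2(d+2)α²γ²‖θ₀‖²₂ + σ² and L(α, γ) := ‖θ₀‖²₂(γα + γ − 1)² + σ². At the point (α, β, γ) = (1, 1, 0), one gradient-descent step on L with step size η updates γ to 4η‖θ₀‖²₂ (α unchanged), and the resulting zero-shot error satisfies E(1, 1, 4η‖θ₀‖²₂) − E(1, 1, 0) = 16(d+2)(d+4)η²‖θ₀‖⁶₂ > 0. -/

import Mathlib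

/-- One gradient-descent step on the asymptotic few-shot loss `L` at the
zero-shot optimum `(α,β,γ) = (1,1,0)` leaves `α` unchanged, updates `γ` to
`4η‖θ₀‖²`, and strictly increases the zero-shot error `E`. -/
theorem gradient_step_on_fs_loss_increases_zs_error
    {d : ℕ} (θ₀ : EuclideanSpace ℝ (Fin d)) (hθ₀ : 0 < ‖θ₀‖)
    (σ2 : ℝ) (hσ : 0 ≤ σ2) (η : ℝ) (hη : 0 < η)
    (E : ℝ → ℝ → ℝ → ℝ)
    (hE : ∀ α β γ : ℝ, E α β γ =
      ((β + ((d : ℝ) + 2) * γ) * α - 1) ^ 2 * ‖θ₀‖ ^ 2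
        + 2 * ((d : ℝ) + 2) * α ^ 2 * γ ^ 2 * ‖θ₀‖ ^ 2 + σ2)
    (L : ℝ → ℝ → ℝ)
    (hL : ∀ α γ : ℝ, L α γ = ‖θ₀‖ ^ 2 * (γ * α + γ - 1) ^ 2 + σ2) :
    deriv (fun α => L α 0) 1 = 0 ∧
    (0 : ℝ) - η * deriv (fun γ => L 1 γ) 0 = 4 * η * ‖θ₀‖ ^ 2 ∧
    E 1 1 (4 * η * ‖θ₀‖ ^ 2) - E 1 1 0
      = 16 * ((d : ℝ) + 2) * ((d : ℝ) + 4) * η ^ 2 * ‖θ₀‖ ^ 6 ∧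
    0 < E 1 1 (4 * η * ‖θ₀‖ ^ 2) - E 1 1 0 := by
  have hn : (0:ℝ) < ‖θ₀‖ ^ 2 := by positivity
  have hd : (0:ℝ) < (d:ℝ) + 2 := by positivity
  have hd4 : (0:ℝ) < (d:ℝ) + 4 := by positivity
  refine ⟨?_, ?_, ?_, ?_⟩
  · have : (fun α : ℝ => L α 0) = fun _ => ‖θ₀‖ ^ 2 + σ2 := by
      funext α; rw [hL]; ring
    rw [this, deriv_const]
  · have h1 : (fun γ : ℝ => L 1 γ) = fun γ => ‖θ₀‖ ^ 2 * (2*γ - 1) ^ 2 + σ2 := by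
      funext γ; rw [hL]; ring_nf
    rw [h1]
    have : HasDerivAt (fun γ : ℝ => ‖θ₀‖ ^ 2 * (2*γ - 1) ^ 2 + σ2) (-4 * ‖θ₀‖ ^ 2) 0 := by
      have h := ((hasDerivAt_id (0:ℝ)).const_mul (2:ℝ)).sub_const 1
      have h2 := (h.pow 2).const_mul (‖θ₀‖ ^ 2)
      have := h2.add_const σ2
      refine this.congr_deriv ?_
      simp; ring
    rw [this.deriv]; ring
  · rw [hE, hE]; ring
  · rw [hE, hE]
    have : ((1 + ((d:ℝ) + 2) * (4 * η * ‖θ₀‖ ^ 2)) * 1 - 1) ^ 2 * ‖θ₀‖ ^ 2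
        + 2 * ((d:ℝ) + 2) * 1 ^ 2 * (4 * η * ‖θ₀‖ ^ 2) ^ 2 * ‖θ₀‖ ^ 2 + σ2
        - (((1 + ((d:ℝ) + 2) * 0) * 1 - 1) ^ 2 * ‖θ₀‖ ^ 2
        + 2 * ((d:ℝ) + 2) * 1 ^ 2 * 0 ^ 2 * ‖θ₀‖ ^ 2 + σ2)
        = 16 * ((d:ℝ) + 2) * ((d:ℝ) + 4) * η ^ 2 * ‖θ₀‖ ^ 6 := by ring
    rw [this]; positivity
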